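/- Let ξ be an irrational real number, let n be a positive integer, let q ≥ 1 be the denominator of a convergent of the continued fraction expansion of ξ, and set c₅ = (n+1)·2^{n+1}. Then there exists a monic polynomial Q ∈ ℤ[T] of degree n+1 that is irreducible over ℚ and satisfies c₅ q^{2k−n} ≤ |Q^{[k]}(ξ)| ≤ 3 c₅ q^{2k−n} for all 0 ≤ k ≤ n. -/

import Mathlib

open Polynomial

/-- The height of an integer polynomial: the largest absolute value of its coefficients. -/
noncomputable def intPolyHeight (P : Polynomial ℤ) : ℝ :=
  ((P.support.sup fun k => (P.coeff k).natAbs : ℕ) : ℝ)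

/-- The `k`-th divided derivative of a real polynomial at `ξ`, i.e. the coefficient of
`(T - ξ)^k` in the Taylor expansion of `P` at `ξ`. -/
noncomputable def divDeriv (ξ : ℝ) (P : Polynomial ℝ) (k : ℕ) : ℝ :=
  (Polynomial.taylor ξ P).coeff k

/-- The `k`-th divided derivative at `ξ` of an integer polynomial, viewed over `ℝ`. -/
noncomputable def divDerivZ (ξ : ℝ) (P : Polynomial ℤ) (k : ℕ) : ℝ :=
  divDeriv ξ (P.map (Int.castRingHom ℝ)) k

/-- The multiset of complex roots of an integer polynomial (the conjugates of `α`, when `P`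
is the irreducible polynomial of `α`). -/
noncomputable def conjRoots (P : Polynomial ℤ) : Multiset ℂ :=
  (P.map (Int.castRingHom ℂ)).roots

/-- `q ≥ 1` is the denominator of a convergent of the continued fraction expansion of `ξ`. -/
def IsConvergentDenom (ξ : ℝ) (q : ℕ) : Prop :=
  1 ≤ q ∧ ∃ i : ℕ, (GenContFract.of ξ).dens i = (q : ℝ)


section AuxiliaryLemmas

open Finset



lemma coeff_linear_pow {R : Type*} [CommRing R] (u v : R) (m k : ℕ) :
    ((C u * X + C v) ^ m).coeff k = (m.choose k : R) * u ^ k * v ^ (m - k) := by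
  rw [add_pow, finset_sum_coeff]
  have hterm : ∀ i, (((C u * X) ^ i * C v ^ (m - i) * ((m.choose i : ℕ) : R[X])).coeff k)
      = if i = k then (m.choose i : R) * u ^ i * v ^ (m - i) else 0 := by
    intro i
    have : (C u * X) ^ i * C v ^ (m - i) * ((m.choose i : ℕ) : R[X])
        = C ((m.choose i : R) * u ^ i * v ^ (m - i)) * X ^ i := by
      rw [mul_pow, ← C_pow, ← C_pow, ← C_eq_natCast]
      simp only [C_mul]
      ring
    rw [this, coeff_C_mul, coeff_X_pow]
    rcases eq_or_ne i k with h | h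
    · simp [h]
    · simp [h, Ne.symm h]
  rw [Finset.sum_congr rfl (fun i _ => hterm i)]
  rw [Finset.sum_ite_eq' (range (m + 1)) k]
  by_cases hk : k ≤ m
  · simp [Finset.mem_range, Nat.lt_succ_iff, hk]
  · push_neg at hk
    simp [Finset.mem_range, Nat.lt_succ_iff, Nat.choose_eq_zero_of_lt hk, not_le.mpr hk]

lemma span_pow_pair {R : Type*} [CommRing R] (A B : R[X]) (α β γ δ : R)
    (hX : (X : R[X]) = C α * A + C β * B) (h1 : (1 : R[X]) = C γ * A + C δ * B)
    (n : ℕ) (P : R[X]) (hP : P.natDegree < n + 1) :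
    P ∈ Submodule.span R (Set.range fun a : Fin (n + 1) => A ^ (a : ℕ) * B ^ (n - (a : ℕ))) := by
  have hmono : ∀ k, k ≤ n → (X : R[X]) ^ k ∈
      Submodule.span R (Set.range fun a : Fin (n + 1) => A ^ (a : ℕ) * B ^ (n - (a : ℕ))) := by
    intro k hk
    have hXk : (X : R[X]) ^ k = (C α * A + C β * B) ^ k * (C γ * A + C δ * B) ^ (n - k) := by
      rw [← hX, ← h1, one_pow, mul_one]
    rw [hXk, add_pow, add_pow, Finset.sum_mul_sum]
    apply Submodule.sum_mem
    intro i hi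
    apply Submodule.sum_mem
    intro j hj
    rw [Finset.mem_range, Nat.lt_succ_iff] at hi hj
    have hij : i + j ≤ n := by omega
    have hexp : (k - i) + ((n - k) - j) = n - (i + j) := by omega
    have hterm : (C α * A) ^ i * (C β * B) ^ (k - i) * (k.choose i : R[X]) *
        ((C γ * A) ^ j * (C δ * B) ^ ((n - k) - j) * ((n - k).choose j : R[X]))
        = (α ^ i * β ^ (k - i) * γ ^ j * δ ^ ((n - k) - j) * (k.choose i : R)
            * ((n - k).choose j : R)) • (A ^ (i + j) * B ^ (n - (i + j))) := by
      rw [smul_eq_C_mul, ← hexp, pow_add, pow_add]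
      simp only [mul_pow, ← C_pow, ← C_eq_natCast, C_mul]
      ring
    rw [hterm]
    exact Submodule.smul_mem _ _ (Submodule.subset_span
      ⟨⟨i + j, by omega⟩, rfl⟩)
  rw [P.as_sum_range' (n + 1) hP]
  apply Submodule.sum_mem
  intro k hk
  rw [← C_mul_X_pow_eq_monomial, ← smul_eq_C_mul]
  exact Submodule.smul_mem _ _ (hmono k (by simpa [Nat.lt_succ_iff] using hk))

lemma choose_le_two_pow' (n k : ℕ) : n.choose k ≤ 2 ^ n := by
  rcases le_or_gt k n with h | h
  · calc n.choose k ≤ ∑ m ∈ range (n + 1), n.choose m :=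
        Finset.single_le_sum (fun i _ => Nat.zero_le _) (by simp [Nat.lt_succ_iff, h])
    _ = 2 ^ n := Nat.sum_range_choose n
  · simp [Nat.choose_eq_zero_of_lt h]

lemma exists_irreducible_F2 (d : ℕ) (hd : 0 < d) :
    ∃ h : (ZMod 2)[X], h.Monic ∧ Irreducible h ∧ h.natDegree = d := by
  haveI : Fact (Nat.Prime 2) := ⟨Nat.prime_two⟩
  obtain ⟨α, hα⟩ := Field.exists_primitive_element_of_finite_top (ZMod 2) (GaloisField 2 d)
  have hint : IsIntegral (ZMod 2) α := IsIntegral.of_finite _ _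
  refine ⟨minpoly (ZMod 2) α, minpoly.monic hint, minpoly.irreducible hint, ?_⟩
  have h1 := IntermediateField.adjoin.finrank hint
  rw [hα, IntermediateField.finrank_top'] at h1
  rw [← h1, GaloisField.finrank 2 hd.ne']




lemma pow_one_div_aux {Q : ℝ} (Q0 : 0 < Q) {i a : ℕ} (h : i ≤ a) :
    Q ^ i * (1 / Q) ^ (a - i) = Q ^ (2 * i) / Q ^ a := by
  rw [one_div, inv_pow, mul_comm, inv_mul_eq_div,
    div_eq_div_iff (pow_pos Q0 _).ne' (pow_pos Q0 _).ne', ← pow_add, ← pow_add]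
  congr 1
  omega

lemma coeff_prod_bound {Q θ Q' θ' : ℝ} (hQ1 : 1 ≤ Q) (hθ : |θ| ≤ 1 / Q) (hθ' : |θ'| ≤ 1 / Q)
    (hQ'0 : 0 ≤ Q') (hQ'Q : Q' ≤ Q) (a b n k : ℕ) (hab : a + b = n) :
    |((C Q * X + C θ) ^ a * (C Q' * X + C θ') ^ b).coeff k|
      ≤ (n.choose k : ℝ) * (Q ^ (2 * k) / Q ^ n) := by
  have Q0 : (0 : ℝ) < Q := lt_of_lt_of_le one_pos hQ1
  have hW : (0:ℝ) ≤ Q ^ (2 * k) / Q ^ n := by positivity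
  rw [coeff_mul]
  refine le_trans (Finset.abs_sum_le_sum_abs _ _) ?_
  have hbound : ∀ x ∈ antidiagonal k,
      |((C Q * X + C θ) ^ a).coeff x.1 * ((C Q' * X + C θ') ^ b).coeff x.2|
        ≤ ((a.choose x.1 * b.choose x.2 : ℕ) : ℝ) * (Q ^ (2 * k) / Q ^ n) := by
    rintro ⟨i, j⟩ hx
    rw [Finset.HasAntidiagonal.mem_antidiagonal] at hx
    simp only [coeff_linear_pow]
    rcases lt_or_ge a i with hia | hia
    · simp [Nat.choose_eq_zero_of_lt hia]
    rcases lt_or_ge b j with hjb | hjb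
    · simp [Nat.choose_eq_zero_of_lt hjb]
    have h1 : |(a.choose i : ℝ) * Q ^ i * θ ^ (a - i)|
        ≤ (a.choose i : ℝ) * (Q ^ i * (1 / Q) ^ (a - i)) := by
      rw [abs_mul, abs_mul, Nat.abs_cast, abs_pow, abs_pow, abs_of_nonneg Q0.le, mul_assoc]
      gcongr
    have h2 : |(b.choose j : ℝ) * Q' ^ j * θ' ^ (b - j)|
        ≤ (b.choose j : ℝ) * (Q ^ j * (1 / Q) ^ (b - j)) := by
      rw [abs_mul, abs_mul, Nat.abs_cast, abs_pow, abs_pow, abs_of_nonneg hQ'0, mul_assoc]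
      gcongr
    have hkey : Q ^ i * (1 / Q) ^ (a - i) * (Q ^ j * (1 / Q) ^ (b - j))
        = Q ^ (2 * k) / Q ^ n := by
      have e1 : 2 * i + 2 * j = 2 * k := by omega
      rw [pow_one_div_aux Q0 hia, pow_one_div_aux Q0 hjb, div_mul_div_comm, ← pow_add, ← pow_add,
        e1, hab]
    calc |(a.choose i : ℝ) * Q ^ i * θ ^ (a - i) * ((b.choose j : ℝ) * Q' ^ j * θ' ^ (b - j))|
        = |(a.choose i : ℝ) * Q ^ i * θ ^ (a - i)| * |(b.choose j : ℝ) * Q' ^ j * θ' ^ (b - j)| :=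
          abs_mul _ _
      _ ≤ (a.choose i : ℝ) * (Q ^ i * (1 / Q) ^ (a - i)) *
            ((b.choose j : ℝ) * (Q ^ j * (1 / Q) ^ (b - j))) := by
          apply mul_le_mul h1 h2 (abs_nonneg _)
          positivity
      _ = ((a.choose i * b.choose j : ℕ) : ℝ) * (Q ^ (2 * k) / Q ^ n) := by
          rw [← hkey]; push_cast; ring
  refine le_trans (Finset.sum_le_sum hbound) ?_
  rw [← Finset.sum_mul]
  apply le_of_eq
  congr 1
  rw [← Nat.cast_sum, ← Nat.add_choose_eq, hab]



lemma of_contsAux_int (v : ℝ) (hnt : ∀ m, ¬(GenContFract.of v).TerminatedAt m) :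
    ∀ m : ℕ, ∃ a b : ℤ, (GenContFract.of v).contsAux m = ⟨(a : ℝ), (b : ℝ)⟩ := by
  intro m
  induction m using Nat.strong_induction_on with
  | _ m ih =>
    match m with
    | 0 => exact ⟨1, 0, by simp [GenContFract.zeroth_contAux_eq_one_zero]⟩
    | 1 =>
      refine ⟨⌊v⌋, 1, ?_⟩
      rw [GenContFract.first_contAux_eq_h_one, GenContFract.of_h_eq_floor]
      simp
    | (m + 2) =>
      obtain ⟨gp, hgp⟩ : ∃ gp, (GenContFract.of v).s.get? m = some gp :=
        Option.ne_none_iff_exists'.1 (fun hn => hnt m (GenContFract.terminatedAt_iff_s_none.2 hn))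
      have ha : gp.a = 1 := GenContFract.of_partNum_eq_one (GenContFract.partNum_eq_s_a hgp)
      obtain ⟨z, hz⟩ := GenContFract.exists_int_eq_of_partDen (GenContFract.partDen_eq_s_b hgp)
      obtain ⟨a₀, b₀, h₀⟩ := ih m (by omega)
      obtain ⟨a₁, b₁, h₁⟩ := ih (m + 1) (by omega)
      refine ⟨z * a₁ + a₀, z * b₁ + b₀, ?_⟩
      rw [GenContFract.contsAux_recurrence hgp h₀ h₁, ha, hz]
      simp only [GenContFract.Pair.mk.injEq]
      constructor <;> push_cast <;> ring

lemma one_le_of_dens (v : ℝ) : ∀ m : ℕ, (1 : ℝ) ≤ (GenContFract.of v).dens m := by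
  intro m
  induction m with
  | zero => rw [GenContFract.zeroth_den_eq_one]
  | succ m ih => exact le_trans ih (GenContFract.of_den_mono)

lemma abs_den_mul_sub_num (v : ℝ) (hnt : ∀ m, ¬(GenContFract.of v).TerminatedAt m) (m : ℕ) :
    |(GenContFract.of v).dens m * v - (GenContFract.of v).nums m|
      ≤ 1 / (GenContFract.of v).dens (m + 1) := by
  have h1 := GenContFract.abs_sub_convs_le (hnt m) (v := v)
  have hd : (0:ℝ) < (GenContFract.of v).dens m := lt_of_lt_of_le one_pos (one_le_of_dens v m)
  have hd1 : (0:ℝ) < (GenContFract.of v).dens (m + 1) :=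
    lt_of_lt_of_le one_pos (one_le_of_dens v (m + 1))
  rw [GenContFract.conv_eq_num_div_den] at h1
  have key : (GenContFract.of v).dens m * v - (GenContFract.of v).nums m
      = (GenContFract.of v).dens m * (v - (GenContFract.of v).nums m / (GenContFract.of v).dens m) := by
    field_simp
  rw [key, abs_mul, abs_of_pos hd]
  calc (GenContFract.of v).dens m * |v - (GenContFract.of v).nums m / (GenContFract.of v).dens m|
      ≤ (GenContFract.of v).dens m *
        (1 / ((GenContFract.of v).dens m * (GenContFract.of v).dens (m + 1))) := by gcongr
    _ = 1 / (GenContFract.of v).dens (m + 1) := by field_simp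




lemma exists_good_pair (ξ : ℝ) (hξ : Irrational ξ) (q : ℕ) (hq1 : 1 ≤ q)
    (hden : ∃ i, (GenContFract.of ξ).dens i = (q : ℝ)) :
    ∃ p p' q' : ℤ, 0 ≤ q' ∧ (q' : ℝ) ≤ (q : ℝ) ∧
      ((q : ℤ) * p' - p * q' = 1 ∨ (q : ℤ) * p' - p * q' = -1) ∧
      |(q : ℝ) * ξ - (p : ℝ)| ≤ 1 / q ∧ |(q' : ℝ) * ξ - (p' : ℝ)| ≤ 1 / q := by
  have hnt : ∀ m, ¬(GenContFract.of ξ).TerminatedAt m := by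
    intro m hm
    have ht : (GenContFract.of ξ).Terminates := ⟨m, hm⟩
    rw [GenContFract.terminates_iff_rat] at ht
    obtain ⟨r, hr⟩ := ht
    exact hξ ⟨r, hr.symm⟩
  rcases eq_or_lt_of_le hq1 with hq1' | hq2
  · -- q = 1
    refine ⟨⌊ξ⌋, 1, 0, le_refl 0, by simp [← hq1'], Or.inl (by simp [← hq1']), ?_, ?_⟩
    · rw [← hq1']
      push_cast
      rw [one_mul]
      have h3 : |ξ - (⌊ξ⌋ : ℝ)| ≤ 1 := by
        rw [abs_le]
        constructor
        · linarith [Int.floor_le ξ, Int.lt_floor_add_one ξ]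
        · linarith [Int.floor_le ξ, Int.lt_floor_add_one ξ]
      simpa using h3
    · rw [← hq1']; norm_num
  · -- q ≥ 2
    obtain ⟨i, hi⟩ := hden
    obtain ⟨j, rfl⟩ : ∃ j, i = j + 1 := by
      rcases i with _ | j
      · exfalso
        rw [GenContFract.zeroth_den_eq_one] at hi
        have : (q : ℝ) ≥ 2 := by exact_mod_cast hq2
        linarith
      · exact ⟨j, rfl⟩
    obtain ⟨p', q', hpq'⟩ := of_contsAux_int ξ hnt (j + 1)
    obtain ⟨p, qq, hpq⟩ := of_contsAux_int ξ hnt (j + 2)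
    have hnum_j : (GenContFract.of ξ).nums j = (p' : ℝ) := by
      rw [GenContFract.num_eq_conts_a, GenContFract.nth_cont_eq_succ_nth_contAux, hpq']
    have hden_j : (GenContFract.of ξ).dens j = (q' : ℝ) := by
      rw [GenContFract.den_eq_conts_b, GenContFract.nth_cont_eq_succ_nth_contAux, hpq']
    have hnum_j1 : (GenContFract.of ξ).nums (j + 1) = (p : ℝ) := by
      rw [GenContFract.num_eq_conts_a, GenContFract.nth_cont_eq_succ_nth_contAux, hpq]
    have hden_j1 : (GenContFract.of ξ).dens (j + 1) = (qq : ℝ) := by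
      rw [GenContFract.den_eq_conts_b, GenContFract.nth_cont_eq_succ_nth_contAux, hpq]
    have hqq : (qq : ℝ) = (q : ℝ) := by rw [← hden_j1, hi]
    have hqqz : qq = (q : ℤ) := by exact_mod_cast hqq
    -- determinant
    have hdet := SimpContFract.determinant (s := SimpContFract.of ξ) (n := j) (hnt j)
    have hcoe : ((SimpContFract.of ξ : SimpContFract ℝ) : GenContFract ℝ) = GenContFract.of ξ := rfl
    rw [hcoe, hnum_j, hnum_j1, hden_j, hden_j1, hqq] at hdet
    have hdetZ : p' * (q : ℤ) - q' * p = (-1) ^ (j + 1) := by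
      have : ((p' * (q : ℤ) - q' * p : ℤ) : ℝ) = (((-1 : ℤ) ^ (j + 1) : ℤ) : ℝ) := by
        push_cast
        linarith [hdet]
      exact_mod_cast this
    have hdet' : (q : ℤ) * p' - p * q' = 1 ∨ (q : ℤ) * p' - p * q' = -1 := by
      rcases Nat.even_or_odd (j + 1) with he | ho
      · left; rw [he.neg_one_pow] at hdetZ; linarith
      · right; rw [ho.neg_one_pow] at hdetZ; linarith
    -- bounds
    have hone := one_le_of_dens ξ
    have hmono : ∀ m, (GenContFract.of ξ).dens m ≤ (GenContFract.of ξ).dens (m + 1) :=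
      fun m => GenContFract.of_den_mono
    have habs1 : |(q : ℝ) * ξ - (p : ℝ)| ≤ 1 / q := by
      have h := abs_den_mul_sub_num ξ hnt (j + 1)
      rw [hnum_j1, hden_j1, hqq] at h
      refine le_trans h ?_
      apply one_div_le_one_div_of_le
      · exact lt_of_lt_of_le one_pos (by exact_mod_cast Nat.one_le_cast.mpr hq1)
      · calc ((q : ℝ)) = (GenContFract.of ξ).dens (j + 1) := hi.symm
          _ ≤ (GenContFract.of ξ).dens (j + 2) := hmono (j + 1)
    have habs2 : |(q' : ℝ) * ξ - (p' : ℝ)| ≤ 1 / q := by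
      have h := abs_den_mul_sub_num ξ hnt j
      rw [hnum_j, hden_j, hi] at h
      exact h
    have hq'0 : (0 : ℝ) ≤ (q' : ℝ) := by
      rw [← hden_j]; linarith [hone j]
    refine ⟨p, p', q', by exact_mod_cast hq'0, ?_, hdet', habs1, habs2⟩
    rw [← hden_j, ← hi]
    exact hmono j

/-- The span lemma specialised to a pair of linear forms with determinant of absolute value 1. -/
lemma span_LL' {R : Type*} [CommRing R] (qr pr q'r p'r e : R)
    (he : e * (qr * p'r - pr * q'r) = 1)
    (n : ℕ) (P : R[X]) (hP : P.natDegree < n + 1) :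
    P ∈ Submodule.span R (Set.range fun a : Fin (n + 1) =>
      (C qr * X + C (-pr)) ^ (a : ℕ) * (C q'r * X + C (-p'r)) ^ (n - (a : ℕ))) := by
  refine span_pow_pair _ _ (e * p'r) (-(e * pr)) (e * q'r) (-(e * qr)) ?_ ?_ n P hP
  · calc (X : R[X]) = C 1 * X + C 0 := by simp
    _ = C (e * p'r * qr + -(e * pr) * q'r) * X
          + C (e * p'r * (-pr) + -(e * pr) * (-p'r)) := by
        congr 1
        · congr 1; rw [← he]; congr 1; ring
        · congr 1; ring
    _ = C (e * p'r) * (C qr * X + C (-pr)) + C (-(e * pr)) * (C q'r * X + C (-p'r)) := by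
        simp only [C_add, C_mul, C_neg]; ring
  · calc (1 : R[X]) = C 1 * 1 + C 0 := by simp
    _ = C (e * q'r * (-pr) + -(e * qr) * (-p'r)) * 1
          + C (e * q'r * qr + -(e * qr) * q'r) * X := by
        congr 1
        · congr 1; congr 1; rw [← he]; ring
        · rw [show e * q'r * qr + -(e * qr) * q'r = 0 by ring]; simp
    _ = C (e * q'r) * (C qr * X + C (-pr)) + C (-(e * qr)) * (C q'r * X + C (-p'r)) := by
        simp only [C_add, C_mul, C_neg]; ring


end AuxiliaryLemmas

open Finset in
/-- Existence of irreducible monic polynomials with controlled divided derivatives: if `q ≥ 1`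
is the denominator of a convergent of the irrational number `ξ` and `c₅ = (n+1)·2^(n+1)`,
then there is a monic polynomial `Q ∈ ℤ[T]` of degree `n+1`, irreducible over `ℚ`, with
`c₅ q^(2k-n) ≤ |Q^{[k]}(ξ)| ≤ 3 c₅ q^(2k-n)` for all `0 ≤ k ≤ n`. -/
theorem exists_irreducible_monic_poly_controlled
    (ξ : ℝ) (hξ : Irrational ξ) (n : ℕ) (hn : 0 < n) (q : ℕ)
    (hq : IsConvergentDenom ξ q) :
    ∃ Q : Polynomial ℤ, Q.Monic ∧ Q.natDegree = n + 1 ∧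
      Irreducible (Q.map (Int.castRingHom ℚ)) ∧
      ∀ k ≤ n,
        ((n : ℝ) + 1) * 2 ^ (n + 1) * (q : ℝ) ^ (2 * (k : ℝ) - n) ≤ |divDerivZ ξ Q k| ∧
        |divDerivZ ξ Q k| ≤ 3 * (((n : ℝ) + 1) * 2 ^ (n + 1)) * (q : ℝ) ^ (2 * (k : ℝ) - n) := by
  obtain ⟨hq1, hden⟩ := hq
  obtain ⟨p, p', q', hq'0, hq'le, hdet, habs1, habs2⟩ := exists_good_pair ξ hξ q hq1 hden
  have hqR : (1 : ℝ) ≤ (q : ℝ) := by exact_mod_cast hq1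
  have hqR0 : (0 : ℝ) < (q : ℝ) := lt_of_lt_of_le one_pos hqR
  -- determinant data
  have hε2 : ((q : ℤ) * p' - p * q') * ((q : ℤ) * p' - p * q') = 1 := by
    rcases hdet with h | h <;> rw [h] <;> norm_num
  -- abbreviations
  set c5 : ℝ := ((n : ℝ) + 1) * 2 ^ (n + 1) with hc5
  set wq : ℕ → ℝ := fun k => (q : ℝ) ^ (2 * k) / (q : ℝ) ^ n with hwq
  set t : ℕ → ℝ := fun k => 2 * c5 * wq k - (((n + 1).choose k : ℝ)) * ξ ^ (n + 1 - k) with ht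
  set θ : ℝ := (q : ℝ) * ξ - (p : ℝ) with hθ
  set θ' : ℝ := (q' : ℝ) * ξ - (p' : ℝ) with hθ'
  -- the target polynomial over ℝ
  set G : ℝ[X] := ∑ k ∈ range (n + 1), C (t k) * (X - C ξ) ^ k with hG
  have hGdeg : G.natDegree < n + 1 := by
    apply Nat.lt_succ_of_le
    apply natDegree_sum_le_of_forall_le
    intro k hk
    refine le_trans (natDegree_C_mul_le _ _) (le_trans natDegree_pow_le ?_)
    have : (X - C ξ : ℝ[X]).natDegree ≤ 1 := natDegree_X_sub_C_le ξ
    calc k * (X - C ξ : ℝ[X]).natDegree ≤ k * 1 := by gcongr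
      _ ≤ n := by rw [mem_range, Nat.lt_succ_iff] at hk; omega
  have heR : (((q : ℤ) * p' - p * q' : ℤ) : ℝ)
      * ((q : ℝ) * ((p' : ℤ) : ℝ) - ((p : ℤ) : ℝ) * ((q' : ℤ) : ℝ)) = 1 := by
    exact_mod_cast hε2
  obtain ⟨y, hy⟩ := (Submodule.mem_span_range_iff_exists_fun ℝ).1
    (span_LL' ((q : ℕ) : ℝ) ((p : ℤ) : ℝ) ((q' : ℤ) : ℝ) ((p' : ℤ) : ℝ) _ heR n G hGdeg)
  -- mod 2 data
  obtain ⟨hpol, hmon2, hirr2, hdeg2⟩ := exists_irreducible_F2 (n + 1) (by omega)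
  set g2 : (ZMod 2)[X] := hpol - X ^ (n + 1) with hg2
  have hg2deg : g2.natDegree < n + 1 := by
    rcases eq_or_ne g2 0 with h0 | h0
    · rw [h0, natDegree_zero]; omega
    · rw [natDegree_lt_iff_degree_lt h0]
      have hd1 : hpol.degree = ((n + 1 : ℕ) : WithBot ℕ) := by
        rw [degree_eq_natDegree hmon2.ne_zero, hdeg2]
      have := degree_sub_lt (q := (X ^ (n + 1) : (ZMod 2)[X]))
        (by rw [hd1, degree_X_pow]) hmon2.ne_zero
        (by rw [hmon2.leadingCoeff, leadingCoeff_X_pow])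
      rw [hd1] at this
      exact this
  have heF : (((q : ℤ) * p' - p * q' : ℤ) : ZMod 2)
      * (((q : ℤ) : ZMod 2) * ((p' : ℤ) : ZMod 2) - ((p : ℤ) : ZMod 2) * ((q' : ℤ) : ZMod 2))
      = 1 := by
    exact_mod_cast congrArg (fun z : ℤ => (z : ZMod 2)) hε2
  obtain ⟨v2, hv2⟩ := (Submodule.mem_span_range_iff_exists_fun (ZMod 2)).1
    (span_LL' ((q : ℤ) : ZMod 2) ((p : ℤ) : ZMod 2) ((q' : ℤ) : ZMod 2) ((p' : ℤ) : ZMod 2)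
      _ heF n g2 hg2deg)
  -- integer coefficients
  set w : Fin (n + 1) → ℤ := fun a => ((v2 a).val : ℤ) with hw
  set x : Fin (n + 1) → ℤ := fun a => w a + 2 * round ((y a - (w a : ℝ)) / 2) with hx
  have hxy : ∀ a : Fin (n + 1), |(x a : ℝ) - y a| ≤ 1 := by
    intro a
    have h1 : |(y a - (w a : ℝ)) / 2 - round ((y a - (w a : ℝ)) / 2)| ≤ 1 / 2 :=
      abs_sub_round _
    have h2 : (x a : ℝ) - y a
        = 2 * ((round ((y a - (w a : ℝ)) / 2) : ℝ) - (y a - (w a : ℝ)) / 2) := by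
      rw [hx]
      push_cast
      ring
    rw [h2, abs_mul, abs_two, abs_sub_comm]
    linarith
  have hx2 : ∀ a : Fin (n + 1), ((x a : ℤ) : ZMod 2) = v2 a := by
    intro a
    have hval : ∀ z : ZMod 2, (((z.val : ℤ)) : ZMod 2) = z := by decide
    rw [hx]
    push_cast
    rw [show ((2 : ZMod 2)) = 0 by decide]
    simp [hw, hval]
  -- the polynomial
  set LZ : ℤ[X] := C (q : ℤ) * X + C (-p) with hLZ
  set LZ' : ℤ[X] := C q' * X + C (-p') with hLZ'
  set QS : ℤ[X] := ∑ a : Fin (n + 1), C (x a) * (LZ ^ (a : ℕ) * LZ' ^ (n - (a : ℕ))) with hQS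
  set Q : ℤ[X] := X ^ (n + 1) + QS with hQ
  -- degree facts
  have hdegS : QS.natDegree ≤ n := by
    apply natDegree_sum_le_of_forall_le
    intro a _
    refine le_trans (natDegree_C_mul_le _ _) (le_trans natDegree_mul_le ?_)
    have h1 : (LZ ^ (a : ℕ)).natDegree ≤ (a : ℕ) * 1 :=
      le_trans natDegree_pow_le (by gcongr; exact natDegree_linear_le)
    have h2 : (LZ' ^ (n - (a : ℕ))).natDegree ≤ (n - (a : ℕ)) * 1 :=
      le_trans natDegree_pow_le (by gcongr; exact natDegree_linear_le)
    have ha : (a : ℕ) ≤ n := by omega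
    omega
  have hdegSlt : QS.degree < ((n + 1 : ℕ) : WithBot ℕ) :=
    lt_of_le_of_lt (degree_le_natDegree.trans (by exact_mod_cast Nat.cast_le.2 hdegS))
      (by exact_mod_cast Nat.cast_lt.2 (Nat.lt_succ_self n))
  have hmonic : Q.Monic := by
    rw [hQ]
    exact monic_X_pow_add (by exact_mod_cast hdegSlt)
  have hdegQ : Q.natDegree = n + 1 := by
    rw [hQ]
    have : (X ^ (n + 1) + QS : ℤ[X]).degree = (X ^ (n + 1) : ℤ[X]).degree := by
      apply degree_add_eq_left_of_degree_lt
      rw [degree_X_pow]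
      exact hdegSlt
    rw [degree_X_pow] at this
    exact natDegree_eq_of_degree_eq_some this
  -- irreducibility via mod 2 reduction
  have hmap2 : Q.map (Int.castRingHom (ZMod 2)) = hpol := by
    have hv2' : ∑ a : Fin (n + 1), (C (v2 a) : (ZMod 2)[X]) *
        ((C ((q : ℤ) : ZMod 2) * X + C (-((p : ℤ) : ZMod 2))) ^ (a : ℕ) *
          (C ((q' : ℤ) : ZMod 2) * X + C (-((p' : ℤ) : ZMod 2))) ^ (n - (a : ℕ))) = g2 := by
      rw [← hv2]
      apply Finset.sum_congr rfl
      intro a _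
      rw [smul_eq_C_mul]
    rw [hQ, hQS, hLZ, hLZ']
    simp only [Polynomial.map_add, Polynomial.map_pow, Polynomial.map_X, Polynomial.map_sum,
      Polynomial.map_mul, map_C]
    simp only [eq_intCast, ← C_eq_intCast]
    simp only [Int.cast_neg]
    have hxx : ∀ a : Fin (n + 1), (C ((x a : ZMod 2)) : (ZMod 2)[X]) = C (v2 a) :=
      fun a => by rw [hx2 a]
    simp only [hxx]
    rw [hv2', hg2]
    ring
  have hirrQ : Irreducible Q :=
    Polynomial.Monic.irreducible_of_irreducible_map (Int.castRingHom (ZMod 2)) Q hmonic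
      (by rw [hmap2]; exact hirr2)
  have hirrQQ : Irreducible (Q.map (Int.castRingHom ℚ)) :=
    (Polynomial.IsPrimitive.Int.irreducible_iff_irreducible_map_cast hmonic.isPrimitive).1 hirrQ
  -- over ℝ
  have hmapR : Q.map (Int.castRingHom ℝ) = X ^ (n + 1) +
      ∑ a : Fin (n + 1), C ((x a : ℝ)) *
        ((C ((q : ℕ) : ℝ) * X + C (-((p : ℤ) : ℝ))) ^ (a : ℕ) *
          (C ((q' : ℤ) : ℝ) * X + C (-((p' : ℤ) : ℝ))) ^ (n - (a : ℕ))) := by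
    rw [hQ, hQS, hLZ, hLZ']
    simp only [Polynomial.map_add, Polynomial.map_pow, Polynomial.map_X, Polynomial.map_sum,
      Polynomial.map_mul, map_C]
    simp only [eq_intCast, ← C_eq_intCast]
    simp only [Int.cast_neg, Int.cast_natCast]
  set F : Fin (n + 1) → ℝ[X] := fun a =>
    (C ((q : ℕ) : ℝ) * X + C θ) ^ (a : ℕ) * (C ((q' : ℤ) : ℝ) * X + C θ') ^ (n - (a : ℕ))
    with hF
  have hAcomp : (C ((q : ℕ) : ℝ) * X + C (-((p : ℤ) : ℝ))).comp (X + C ξ)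
      = C ((q : ℕ) : ℝ) * X + C θ := by
    simp only [add_comp, mul_comp, C_comp, X_comp]
    rw [mul_add, add_assoc, ← C_mul, ← C_add]
    congr 1
  have hBcomp : (C ((q' : ℤ) : ℝ) * X + C (-((p' : ℤ) : ℝ))).comp (X + C ξ)
      = C ((q' : ℤ) : ℝ) * X + C θ' := by
    simp only [add_comp, mul_comp, C_comp, X_comp]
    rw [mul_add, add_assoc, ← C_mul, ← C_add]
    congr 1
  have hDD : ∀ k : ℕ, divDerivZ ξ Q k = ((n + 1).choose k : ℝ) * ξ ^ (n + 1 - k)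
      + ∑ a : Fin (n + 1), (x a : ℝ) * (F a).coeff k := by
    intro k
    unfold divDerivZ divDeriv
    rw [hmapR, taylor_apply, add_comp, pow_comp, X_comp, Polynomial.sum_comp, coeff_add, finset_sum_coeff]
    congr 1
    · rw [show (X + C ξ : ℝ[X]) = C 1 * X + C ξ by rw [C_1, one_mul], coeff_linear_pow]
      simp
    · refine Finset.sum_congr rfl fun a _ => ?_
      simp only [mul_comp, pow_comp, C_comp]
      rw [hAcomp, hBcomp, coeff_C_mul, hF]
  have hGcomp : ∀ k, k ≤ n → (G.comp (X + C ξ)).coeff k = t k := by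
    intro k hk
    rw [hG, Polynomial.sum_comp]
    have h1 : ∀ k' ∈ range (n + 1),
        (C (t k') * (X - C ξ) ^ k').comp (X + C ξ) = C (t k') * X ^ k' := by
      intro k' _
      rw [mul_comp, C_comp, pow_comp, sub_comp, X_comp, C_comp, add_sub_cancel_right]
    rw [Finset.sum_congr rfl h1, finset_sum_coeff]
    have h2 : ∀ k' ∈ range (n + 1),
        (C (t k') * (X : ℝ[X]) ^ k').coeff k = if k' = k then t k else 0 := by
      intro k' _
      rw [coeff_C_mul, coeff_X_pow]
      rcases eq_or_ne k' k with h | h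
      · simp [h]
      · simp [h, Ne.symm h]
    rw [Finset.sum_congr rfl h2, Finset.sum_ite_eq' (range (n + 1)) k]
    simp [Nat.lt_succ_iff, hk]
  have hyF : ∀ k, k ≤ n → ∑ a : Fin (n + 1), y a * (F a).coeff k = t k := by
    intro k hk
    have hy' : ∑ a : Fin (n + 1),
        y a • ((C ((q : ℕ) : ℝ) * X + C (-((p : ℤ) : ℝ))) ^ (a : ℕ) *
          (C ((q' : ℤ) : ℝ) * X + C (-((p' : ℤ) : ℝ))) ^ (n - (a : ℕ))) = G := by
      simpa using hy
    have h4 : (∑ a : Fin (n + 1),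
        y a • ((C ((q : ℕ) : ℝ) * X + C (-((p : ℤ) : ℝ))) ^ (a : ℕ) *
          (C ((q' : ℤ) : ℝ) * X + C (-((p' : ℤ) : ℝ))) ^ (n - (a : ℕ)))).comp (X + C ξ)
        = ∑ a : Fin (n + 1), y a • F a := by
      rw [Polynomial.sum_comp]
      refine Finset.sum_congr rfl fun a _ => ?_
      rw [smul_comp, mul_comp, pow_comp, pow_comp, hAcomp, hBcomp, hF]
    calc ∑ a : Fin (n + 1), y a * (F a).coeff k
        = (∑ a : Fin (n + 1), y a • F a).coeff k := by
          rw [finset_sum_coeff]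
          refine Finset.sum_congr rfl fun a _ => ?_
          rw [coeff_smul, smul_eq_mul]
      _ = ((∑ a : Fin (n + 1),
            y a • ((C ((q : ℕ) : ℝ) * X + C (-((p : ℤ) : ℝ))) ^ (a : ℕ) *
              (C ((q' : ℤ) : ℝ) * X + C (-((p' : ℤ) : ℝ))) ^ (n - (a : ℕ)))).comp
                (X + C ξ)).coeff k := by rw [h4]
      _ = (G.comp (X + C ξ)).coeff k := by rw [hy']
      _ = t k := hGcomp k hk
  have hFbound : ∀ (a : Fin (n + 1)) (k : ℕ),
      |(F a).coeff k| ≤ (n.choose k : ℝ) * wq k := by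
    intro a k
    rw [hF, hwq]
    simp only
    exact coeff_prod_bound hqR habs1 habs2 (by exact_mod_cast hq'0) hq'le
      (a : ℕ) (n - (a : ℕ)) n k (by omega)
  -- conclusion
  refine ⟨Q, hmonic, hdegQ, hirrQQ, ?_⟩
  intro k hk
  have hW0 : 0 < wq k := by
    rw [hwq]
    exact div_pos (pow_pos hqR0 _) (pow_pos hqR0 _)
  have hc5pos : (0 : ℝ) < c5 := by rw [hc5]; positivity
  have hEk : |∑ a : Fin (n + 1), ((x a : ℝ) - y a) * (F a).coeff k|
      ≤ (((n : ℝ) + 1) * 2 ^ n) * wq k := by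
    refine le_trans (Finset.abs_sum_le_sum_abs _ _) ?_
    have hterm : ∀ a : Fin (n + 1),
        |((x a : ℝ) - y a) * (F a).coeff k| ≤ (2 : ℝ) ^ n * wq k := by
      intro a
      rw [abs_mul]
      calc |(x a : ℝ) - y a| * |(F a).coeff k|
          ≤ 1 * ((n.choose k : ℝ) * wq k) :=
            mul_le_mul (hxy a) (hFbound a k) (abs_nonneg _) zero_le_one
        _ ≤ (2 : ℝ) ^ n * wq k := by
            rw [one_mul]
            have hch : (n.choose k : ℝ) ≤ 2 ^ n := by exact_mod_cast choose_le_two_pow' n k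
            exact mul_le_mul_of_nonneg_right hch hW0.le
    calc ∑ a : Fin (n + 1), |((x a : ℝ) - y a) * (F a).coeff k|
        ≤ ∑ _a : Fin (n + 1), (2 : ℝ) ^ n * wq k := Finset.sum_le_sum fun a _ => hterm a
      _ = (((n : ℝ) + 1) * 2 ^ n) * wq k := by
          rw [Finset.sum_const, Finset.card_univ, Fintype.card_fin, nsmul_eq_mul]
          push_cast
          ring
  have hsplit : divDerivZ ξ Q k = 2 * c5 * wq k
      + ∑ a : Fin (n + 1), ((x a : ℝ) - y a) * (F a).coeff k := by
    rw [hDD k]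
    have h6 : ∑ a : Fin (n + 1), (x a : ℝ) * (F a).coeff k
        = ∑ a : Fin (n + 1), y a * (F a).coeff k
          + ∑ a : Fin (n + 1), ((x a : ℝ) - y a) * (F a).coeff k := by
      rw [← Finset.sum_add_distrib]
      refine Finset.sum_congr rfl fun a _ => by ring
    rw [h6, hyF k hk]
    simp only [ht]
    ring
  have hEk' : |divDerivZ ξ Q k - 2 * c5 * wq k| ≤ (((n : ℝ) + 1) * 2 ^ n) * wq k := by
    have h9 : divDerivZ ξ Q k - 2 * c5 * wq k
        = ∑ a : Fin (n + 1), ((x a : ℝ) - y a) * (F a).coeff k := by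
      rw [hsplit]; ring
    rw [h9]
    exact hEk
  have hrw : (q : ℝ) ^ (2 * (k : ℝ) - (n : ℝ)) = wq k := by
    rw [show 2 * (k : ℝ) - (n : ℝ) = ((2 * k : ℕ) : ℝ) - ((n : ℕ) : ℝ) by push_cast; ring]
    rw [Real.rpow_sub hqR0, Real.rpow_natCast, Real.rpow_natCast, hwq]
  have h2pow : (((n : ℝ) + 1) * 2 ^ n) * wq k * 2 = c5 * wq k := by
    rw [hc5, pow_succ]; ring
  have hB0 : (0 : ℝ) ≤ c5 * wq k := by positivity
  have habsD : |divDerivZ ξ Q k - 2 * c5 * wq k| ≥ 0 := abs_nonneg _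
  constructor
  · rw [hrw]
    have h7 : 2 * c5 * wq k ≤ |divDerivZ ξ Q k| + |2 * c5 * wq k - divDerivZ ξ Q k| := by
      calc 2 * c5 * wq k = |2 * c5 * wq k| := (abs_of_pos (by positivity)).symm
        _ = |divDerivZ ξ Q k + (2 * c5 * wq k - divDerivZ ξ Q k)| := by ring_nf
        _ ≤ _ := abs_add_le _ _
    rw [abs_sub_comm] at h7
    linarith
  · rw [hrw]
    have h8 : |divDerivZ ξ Q k| ≤ 2 * c5 * wq k + |divDerivZ ξ Q k - 2 * c5 * wq k| := by
      calc |divDerivZ ξ Q k| = |2 * c5 * wq k + (divDerivZ ξ Q k - 2 * c5 * wq k)| := by ring_nf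
        _ ≤ |2 * c5 * wq k| + |divDerivZ ξ Q k - 2 * c5 * wq k| := abs_add_le _ _
        _ = 2 * c5 * wq k + |divDerivZ ξ Q k - 2 * c5 * wq k| := by
            rw [abs_of_pos (by positivity)]
    linarith
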